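/- Let R ⊆ ℂ be a subset and let M := inf{ |x| : x ∈ R, x ≠ 0 }; assume M > 0. Let n ≥ 1 and let c : ℤ × ℤ → ℂ be a frieze pattern of height n over R \ {0} (so all entries c(i,j) with i+2 ≤ j ≤ i+n+1 lie in R and are non-zero). Then for every k ∈ ℤ the quiddity entry satisfies |c(k, k+2)| ≤ ((n−1) + 2M) / M². -/

import Mathlib

/-- A frieze pattern of height `n` over a subset `S ⊆ ℂ`. -/
def IsFrieze (n : ℕ) (S : Set ℂ) (c : ℤ × ℤ → ℂ) : Prop :=
  (∀ i : ℤ, c (i, i) = 0) ∧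
  (∀ i : ℤ, c (i, i + 1) = 1) ∧
  (∀ i : ℤ, c (i, i + n + 2) = 1) ∧
  (∀ i : ℤ, c (i, i + n + 3) = 0) ∧
  (∀ i j : ℤ, i + 2 ≤ j → j ≤ i + n + 1 → c (i, j) ∈ S) ∧
  (∀ i j : ℤ, i + 1 ≤ j → j ≤ i + n + 2 →
    c (i, j) * c (i + 1, j + 1) - c (i, j + 1) * c (i + 1, j) = 1)

/-- If `M := inf { |x| : x ∈ R, x ≠ 0 } > 0` and `c` is a frieze pattern of height `n` over
`R \ {0}`, then each quiddity entry satisfies `|c(k, k+2)| ≤ ((n − 1) + 2M) / M²`. -/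
theorem stmt6 (R : Set ℂ) (M : ℝ)
    (hM : M = sInf {r : ℝ | ∃ x ∈ R, x ≠ 0 ∧ r = ‖x‖})
    (hMpos : 0 < M)
    (n : ℕ) (hn : 1 ≤ n) (c : ℤ × ℤ → ℂ)
    (hf : IsFrieze n (R \ {0}) c) :
    ∀ k : ℤ, ‖c (k, k + 2)‖ ≤ (((n : ℝ) - 1) + 2 * M) / M ^ 2 := by
  obtain ⟨h0, h1, hn2, hn3, hS, hdet⟩ := hf
  have hMne : M ≠ 0 := ne_of_gt hMpos
  have hR : ∀ x : ℂ, x ∈ R \ {0} → M ≤ ‖x‖ := by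
    intro x hx
    rw [hM]
    refine csInf_le ⟨0, ?_⟩ ⟨x, hx.1, hx.2, rfl⟩
    rintro r ⟨y, -, -, rfl⟩
    exact norm_nonneg y
  intro k
  set a : ℕ → ℂ := fun t => c (k - n - 1 + t, k + 1) with ha
  set b : ℕ → ℂ := fun t => c (k - n - 1 + t, k + 2) with hb
  have ha0 : a 0 = 1 := by
    have h := hn2 (k - n - 1)
    rw [ha]
    convert h using 3 <;> push_cast <;> ring
  have han : a (n + 1) = 1 := by
    have h := h1 k
    rw [ha]
    convert h using 3 <;> push_cast <;> ring
  have hb0 : b 0 = 0 := by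
    have h := hn3 (k - n - 1)
    rw [hb]
    convert h using 3 <;> push_cast <;> ring
  have hbn : b (n + 1) = c (k, k + 2) := by
    rw [hb]
    congr 2
    push_cast; ring
  have hSa : ∀ t : ℕ, 1 ≤ t → t ≤ n → a t ∈ R \ {0} := by
    intro t ht1 ht2
    rw [ha]
    exact hS _ _ (by push_cast; omega) (by push_cast; omega)
  have haM : ∀ t : ℕ, 1 ≤ t → t ≤ n → M ≤ ‖a t‖ := fun t ht1 ht2 =>
    hR _ (hSa t ht1 ht2)
  have haz : ∀ t : ℕ, t ≤ n + 1 → a t ≠ 0 := by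
    intro t ht
    rcases Nat.eq_zero_or_pos t with h | h
    · rw [h, ha0]; exact one_ne_zero
    rcases eq_or_lt_of_le ht with h' | h'
    · rw [h', han]; exact one_ne_zero
    · exact (hSa t h (by omega)).2
  have hd : ∀ t : ℕ, t ≤ n → a t * b (t + 1) - b t * a (t + 1) = 1 := by
    intro t ht
    have h := hdet (k - n - 1 + t) (k + 1) (by push_cast; omega) (by push_cast; omega)
    rw [ha, hb]
    convert h using 4 <;> push_cast <;> ring
  have key : c (k, k + 2) = ∑ t ∈ Finset.range (n + 1), (1 / (a t * a (t + 1))) := by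
    have hsum : ∀ t ∈ Finset.range (n + 1),
        (1 : ℂ) / (a t * a (t + 1)) = b (t + 1) / a (t + 1) - b t / a t := by
      intro t ht
      have htn : t ≤ n := Nat.lt_succ_iff.mp (Finset.mem_range.mp ht)
      have hat := haz t (by omega)
      have hat1 := haz (t + 1) (by omega)
      have h := hd t htn
      rw [div_sub_div _ _ hat1 hat, div_eq_div_iff (mul_ne_zero hat hat1) (mul_ne_zero hat1 hat)]
      linear_combination (-(a t * a (t + 1))) * h
    rw [Finset.sum_congr rfl hsum, Finset.sum_range_sub (fun t => b t / a t),
      hbn, han, hb0, ha0]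
    simp
  set B : ℕ → ℝ := fun t => 1 / M ^ 2 +
    ((if t = 0 then 1 / M - 1 / M ^ 2 else 0) + (if t = n then 1 / M - 1 / M ^ 2 else 0))
    with hB
  have hbound : ∀ t ∈ Finset.range (n + 1),
      ‖1 / (a t * a (t + 1))‖ ≤ B t := by
    intro t ht
    have htn : t ≤ n := Nat.lt_succ_iff.mp (Finset.mem_range.mp ht)
    rw [norm_div, norm_one, norm_mul]
    by_cases ht0 : t = 0
    · subst ht0
      have hB0 : B 0 = 1 / M := by
        rw [hB]
        simp [(show (0:ℕ) ≠ n from by omega)]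
      rw [hB0, ha0, norm_one, one_mul]
      exact one_div_le_one_div_of_le hMpos (haM 1 le_rfl hn)
    · by_cases htn' : t = n
      · rw [htn']
        have hBn : B n = 1 / M := by
          rw [hB]
          simp [(show n ≠ 0 from by omega)]
        rw [hBn, han, norm_one, mul_one]
        exact one_div_le_one_div_of_le hMpos (haM n hn le_rfl)
      · have : B t = 1 / M ^ 2 := by rw [hB]; simp [ht0, htn']
        rw [this, sq]
        refine one_div_le_one_div_of_le (by positivity) ?_
        exact mul_le_mul (haM t (by omega) (by omega)) (haM (t + 1) (by omega) (by omega))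
          hMpos.le (norm_nonneg _)
  have hBsum : ∑ t ∈ Finset.range (n + 1), B t = (((n : ℝ) - 1) + 2 * M) / M ^ 2 := by
    rw [hB]
    rw [Finset.sum_add_distrib, Finset.sum_add_distrib, Finset.sum_const,
      Finset.sum_ite_eq' (Finset.range (n + 1)) 0 (fun _ => 1 / M - 1 / M ^ 2),
      Finset.sum_ite_eq' (Finset.range (n + 1)) n (fun _ => 1 / M - 1 / M ^ 2)]
    simp only [Finset.mem_range, Nat.lt_succ_iff, le_refl, Nat.zero_le, if_true,
      Finset.card_range, nsmul_eq_mul]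
    field_simp
    push_cast; ring
  calc ‖c (k, k + 2)‖
      = ‖∑ t ∈ Finset.range (n + 1), (1 / (a t * a (t + 1)))‖ := by rw [key]
    _ ≤ ∑ t ∈ Finset.range (n + 1), ‖1 / (a t * a (t + 1))‖ :=
        norm_sum_le _ _
    _ ≤ ∑ t ∈ Finset.range (n + 1), B t := Finset.sum_le_sum hbound
    _ = (((n : ℝ) - 1) + 2 * M) / M ^ 2 := hBsum
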